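/- In the fixed run setting, for all i ≤ n, every normal ⊢eq proof from σ(T_i; E_i) is a typed ⊢eq proof. -/

import Mathlib

open scoped Classical

/-! ## Terms -/

inductive Term : Type
  | name : ℕ → Term
  | var  : ℕ → Term
  | pair : Term → Term → Term
  | enc  : Term → Term → Term
deriving DecidableEq

namespace Term

def subterms : Term → Set Term
  | name n => {name n}
  | var x => {var x}
  | pair a b => insert (pair a b) (subterms a ∪ subterms b)
  | enc a b => insert (enc a b) (subterms a ∪ subterms b)

def tvars : Term → Set ℕ
  | name _ => ∅
  | var x => {x}
  | pair a b => tvars a ∪ tvars b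
  | enc a b => tvars a ∪ tvars b

/-- A term is ground if it contains no variables. -/
def ground (t : Term) : Prop := tvars t = ∅

end Term

def sSubterms (X : Set Term) : Set Term := ⋃ t ∈ X, t.subterms
def sVars (X : Set Term) : Set ℕ := ⋃ t ∈ X, t.tvars
def varTerms (V : Set ℕ) : Set Term := Term.var '' V
def pairSubterms (E : Set (Term × Term)) : Set Term :=
  ⋃ e ∈ E, (Term.subterms e.1 ∪ Term.subterms e.2)

/-! ## Substitutions -/

abbrev Subst := ℕ → Term

namespace Subst

def app (σ : Subst) : Term → Term
  | Term.name n => Term.name n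
  | Term.var x => σ x
  | Term.pair a b => Term.pair (app σ a) (app σ b)
  | Term.enc a b => Term.enc (app σ a) (app σ b)

def dom (σ : Subst) : Set ℕ := {x | σ x ≠ Term.var x}

/-- A (totally) ground substitution. -/
def isGround (σ : Subst) : Prop := ∀ x, (σ x).ground

end Subst

def pairImg (σ : Subst) (E : Set (Term × Term)) : Set (Term × Term) :=
  (fun e => (σ.app e.1, σ.app e.2)) '' E

/-! ## Dolev-Yao derivability.  `inv` gives the inverse of a key. -/

inductive dy (inv : Term → Term) (X : Set Term) : Term → Prop
  | ax {t} : t ∈ X → dy inv X t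
  | pair {t u} : dy inv X t → dy inv X u → dy inv X (Term.pair t u)
  | enc {t k} : dy inv X t → dy inv X k → dy inv X (Term.enc t k)
  | fst {t u} : dy inv X (Term.pair t u) → dy inv X t
  | snd {t u} : dy inv X (Term.pair t u) → dy inv X u
  | dec {t k} : dy inv X (Term.enc t k) → dy inv X (inv k) → dy inv X t

/-! ## Positions -/

def positions : Term → Set (List Bool)
  | Term.pair a b =>
      insert [] ((List.cons false) '' positions a ∪ (List.cons true) '' positions b)
  | Term.enc a b =>
      insert [] ((List.cons false) '' positions a ∪ (List.cons true) '' positions b)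
  | _ => {[]}

def subtermAt : Term → List Bool → Option Term
  | t, [] => some t
  | Term.pair a b, i :: p => subtermAt (if i then b else a) p
  | Term.enc a b, i :: p => subtermAt (if i then b else a) p
  | _, _ :: _ => none

/-- Positions of `t` at which the variable `x` occurs. -/
def posof (x : ℕ) (t : Term) : Set (List Bool) := {p | subtermAt t p = some (Term.var x)}

/-- Replace the subterms at every position in `P` by `r`. -/
noncomputable def replaceAt : Term → Set (List Bool) → Term → Term
  | Term.pair a b, P, r =>
      if [] ∈ P then r
      else Term.pair (replaceAt a {p | false :: p ∈ P} r) (replaceAt b {p | true :: p ∈ P} r)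
  | Term.enc a b, P, r =>
      if [] ∈ P then r
      else Term.enc (replaceAt a {p | false :: p ∈ P} r) (replaceAt b {p | true :: p ∈ P} r)
  | t, P, r => if [] ∈ P then r else t

/-- `Qpos t p`: the root position together with all positions `q ++ [i]` of `t`
where `q` is a proper prefix of `p`. -/
def Qpos (t : Term) (p : List Bool) : Set (List Bool) :=
  insert [] {q | q ∈ positions t ∧ ∃ q' i, q = q' ++ [i] ∧ q' <+: p ∧ q' ≠ p}

/-- Abstractable positions of `t` with respect to `S`. -/
def absPos (inv : Term → Term) (S : Set Term) (t : Term) : Set (List Bool) :=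
  {p | p ∈ positions t ∧ ∀ q ∈ Qpos t p, ∀ s, subtermAt t q = some s → dy inv S s}

/-! ## Assertions: `∃ bv. (l ⋈ r)` -/

structure Assertion : Type where
  bv : List ℕ
  l : Term
  r : Term
deriving DecidableEq

namespace Assertion

def bvSet (α : Assertion) : Set ℕ := {x | x ∈ α.bv}
def fv (α : Assertion) : Set ℕ := (α.l.tvars ∪ α.r.tvars) \ α.bvSet
def vars (α : Assertion) : Set ℕ := α.l.tvars ∪ α.r.tvars ∪ α.bvSet
def subterms (α : Assertion) : Set Term := α.l.subterms ∪ α.r.subterms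

end Assertion

def afvSet (A : Set Assertion) : Set ℕ := ⋃ β ∈ A, β.fv
def abvSet (A : Set Assertion) : Set ℕ := ⋃ β ∈ A, β.bvSet
def aVarsSet (A : Set Assertion) : Set ℕ := ⋃ β ∈ A, β.vars
def aSubtermsSet (A : Set Assertion) : Set Term := ⋃ β ∈ A, β.subterms

/-- The public terms of an assertion: maximal subterms containing no quantifiable
variable (`Vq` is the set of quantifiable variables). -/
def pubs (Vq : Set ℕ) (α : Assertion) : Set Term :=
  {t | t ∈ α.subterms ∧ t.tvars ∩ Vq = ∅ ∧
    ¬ ∃ u ∈ α.subterms, t ≠ u ∧ t ∈ u.subterms ∧ u.tvars ∩ Vq = ∅}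

/-- prepend an existential quantifier -/
def exA (x : ℕ) (α : Assertion) : Assertion := ⟨x :: α.bv, α.l, α.r⟩

/-- The `0^k` prefix of term positions of an assertion. -/
def prefixL (α : Assertion) : List Bool := List.replicate α.bv.length false

/-- Positions of an assertion at which the variable `x` occurs. -/
def aPosOf (x : ℕ) (α : Assertion) : Set (List Bool) :=
  (fun p => prefixL α ++ false :: p) '' posof x α.l ∪
  (fun p => prefixL α ++ true :: p) '' posof x α.r

/-- Replace the subterms at every (assertion) position in `P` by `r`. -/
noncomputable def aReplace (α : Assertion) (P : Set (List Bool)) (r : Term) : Assertion :=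
  ⟨α.bv,
   replaceAt α.l {p | (prefixL α ++ false :: p) ∈ P} r,
   replaceAt α.r {p | (prefixL α ++ true :: p) ∈ P} r⟩

/-- Abstractable positions of an assertion with respect to `S`. -/
def aAbs (inv : Term → Term) (S : Set Term) (α : Assertion) : Set (List Bool) :=
  (fun p => prefixL α ++ false :: p) '' absPos inv (S ∪ varTerms α.bvSet) α.l ∪
  (fun p => prefixL α ++ true :: p) '' absPos inv (S ∪ varTerms α.bvSet) α.r

/-! ## The assertion derivation system ⊢a -/

inductive adrv (inv : Term → Term) : Set Term → Set Assertion → Assertion → Prop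
  | ax {S A α} : α ∈ A → adrv inv S A α
  | eq {S A t} : dy inv S t → adrv inv S A ⟨[], t, t⟩
  | sym {S A t u} : adrv inv S A ⟨[], t, u⟩ → adrv inv S A ⟨[], u, t⟩
  | trans {S A t u v} : adrv inv S A ⟨[], t, u⟩ → adrv inv S A ⟨[], u, v⟩ →
      adrv inv S A ⟨[], t, v⟩
  | consPair {S A t0 t1 u0 u1} : adrv inv S A ⟨[], t0, u0⟩ → adrv inv S A ⟨[], t1, u1⟩ →
      adrv inv S A ⟨[], Term.pair t0 t1, Term.pair u0 u1⟩
  | consEnc {S A t0 t1 u0 u1} : adrv inv S A ⟨[], t0, u0⟩ → adrv inv S A ⟨[], t1, u1⟩ →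
      adrv inv S A ⟨[], Term.enc t0 t1, Term.enc u0 u1⟩
  | projPairFst {S A t0 t1 u0 u1} :
      adrv inv S A ⟨[], Term.pair t0 t1, Term.pair u0 u1⟩ →
      dy inv S t0 → dy inv S t1 → dy inv S u0 → dy inv S u1 → adrv inv S A ⟨[], t0, u0⟩
  | projPairSnd {S A t0 t1 u0 u1} :
      adrv inv S A ⟨[], Term.pair t0 t1, Term.pair u0 u1⟩ →
      dy inv S t0 → dy inv S t1 → dy inv S u0 → dy inv S u1 → adrv inv S A ⟨[], t1, u1⟩
  | projEncFst {S A t0 t1 u0 u1} :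
      adrv inv S A ⟨[], Term.enc t0 t1, Term.enc u0 u1⟩ →
      dy inv S t0 → dy inv S t1 → dy inv S u0 → dy inv S u1 → adrv inv S A ⟨[], t0, u0⟩
  | projEncSnd {S A t0 t1 u0 u1} :
      adrv inv S A ⟨[], Term.enc t0 t1, Term.enc u0 u1⟩ →
      dy inv S t0 → dy inv S t1 → dy inv S u0 → dy inv S u1 → adrv inv S A ⟨[], t1, u1⟩
  | exI {S A α x t} : adrv inv S A (aReplace α (aPosOf x α) t) → dy inv S t →
      aPosOf x α ⊆ aAbs inv (insert (Term.var x) S) α → adrv inv S A (exA x α)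
  | exE {S A α x γ} : adrv inv S A (exA x α) →
      adrv inv (insert (Term.var x) S) (insert α A) γ →
      x ∉ sVars S → x ∉ afvSet A → x ∉ γ.fv → adrv inv S A γ

/-- ⊢a without the ∃-elimination rule. -/
inductive adrvNX (inv : Term → Term) : Set Term → Set Assertion → Assertion → Prop
  | ax {S A α} : α ∈ A → adrvNX inv S A α
  | eq {S A t} : dy inv S t → adrvNX inv S A ⟨[], t, t⟩
  | sym {S A t u} : adrvNX inv S A ⟨[], t, u⟩ → adrvNX inv S A ⟨[], u, t⟩
  | trans {S A t u v} : adrvNX inv S A ⟨[], t, u⟩ → adrvNX inv S A ⟨[], u, v⟩ →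
      adrvNX inv S A ⟨[], t, v⟩
  | consPair {S A t0 t1 u0 u1} : adrvNX inv S A ⟨[], t0, u0⟩ → adrvNX inv S A ⟨[], t1, u1⟩ →
      adrvNX inv S A ⟨[], Term.pair t0 t1, Term.pair u0 u1⟩
  | consEnc {S A t0 t1 u0 u1} : adrvNX inv S A ⟨[], t0, u0⟩ → adrvNX inv S A ⟨[], t1, u1⟩ →
      adrvNX inv S A ⟨[], Term.enc t0 t1, Term.enc u0 u1⟩
  | projPairFst {S A t0 t1 u0 u1} :
      adrvNX inv S A ⟨[], Term.pair t0 t1, Term.pair u0 u1⟩ →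
      dy inv S t0 → dy inv S t1 → dy inv S u0 → dy inv S u1 → adrvNX inv S A ⟨[], t0, u0⟩
  | projPairSnd {S A t0 t1 u0 u1} :
      adrvNX inv S A ⟨[], Term.pair t0 t1, Term.pair u0 u1⟩ →
      dy inv S t0 → dy inv S t1 → dy inv S u0 → dy inv S u1 → adrvNX inv S A ⟨[], t1, u1⟩
  | projEncFst {S A t0 t1 u0 u1} :
      adrvNX inv S A ⟨[], Term.enc t0 t1, Term.enc u0 u1⟩ →
      dy inv S t0 → dy inv S t1 → dy inv S u0 → dy inv S u1 → adrvNX inv S A ⟨[], t0, u0⟩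
  | projEncSnd {S A t0 t1 u0 u1} :
      adrvNX inv S A ⟨[], Term.enc t0 t1, Term.enc u0 u1⟩ →
      dy inv S t0 → dy inv S t1 → dy inv S u0 → dy inv S u1 → adrvNX inv S A ⟨[], t1, u1⟩
  | exI {S A α x t} : adrvNX inv S A (aReplace α (aPosOf x α) t) → dy inv S t →
      aPosOf x α ⊆ aAbs inv (insert (Term.var x) S) α → adrvNX inv S A (exA x α)

/-- The equality fragment ⊢eq : derivability of equalities `t ⋈ u` from a set `T` of
terms and a set `E` of equalities, without the quantifier rules. -/
inductive eqdrv (inv : Term → Term) (T : Set Term) (E : Set (Term × Term)) :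
    Term → Term → Prop
  | ax {t u} : (t, u) ∈ E → eqdrv inv T E t u
  | eq {t} : dy inv T t → eqdrv inv T E t t
  | sym {t u} : eqdrv inv T E t u → eqdrv inv T E u t
  | trans {t u v} : eqdrv inv T E t u → eqdrv inv T E u v → eqdrv inv T E t v
  | consPair {t0 t1 u0 u1} : eqdrv inv T E t0 u0 → eqdrv inv T E t1 u1 →
      eqdrv inv T E (Term.pair t0 t1) (Term.pair u0 u1)
  | consEnc {t0 t1 u0 u1} : eqdrv inv T E t0 u0 → eqdrv inv T E t1 u1 →
      eqdrv inv T E (Term.enc t0 t1) (Term.enc u0 u1)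
  | projPairFst {t0 t1 u0 u1} : eqdrv inv T E (Term.pair t0 t1) (Term.pair u0 u1) →
      dy inv T t0 → dy inv T t1 → dy inv T u0 → dy inv T u1 → eqdrv inv T E t0 u0
  | projPairSnd {t0 t1 u0 u1} : eqdrv inv T E (Term.pair t0 t1) (Term.pair u0 u1) →
      dy inv T t0 → dy inv T t1 → dy inv T u0 → dy inv T u1 → eqdrv inv T E t1 u1
  | projEncFst {t0 t1 u0 u1} : eqdrv inv T E (Term.enc t0 t1) (Term.enc u0 u1) →
      dy inv T t0 → dy inv T t1 → dy inv T u0 → dy inv T u1 → eqdrv inv T E t0 u0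
  | projEncSnd {t0 t1 u0 u1} : eqdrv inv T E (Term.enc t0 t1) (Term.enc u0 u1) →
      dy inv T t0 → dy inv T t1 → dy inv T u0 → dy inv T u1 → eqdrv inv T E t1 u1

/-! ## Sanitized pairs, kernels, purity, consistency -/

/-- `(S;A)` is sanitized: free variables avoid `Vq`, bound variables are from `Vq`,
and the public terms of each assertion of `A` belong to `S`. -/
def sanitized (Vq : Set ℕ) (S : Set Term) (A : Set Assertion) : Prop :=
  ((sVars S ∪ afvSet A) ∩ Vq = ∅) ∧ (∀ β ∈ A, β.bvSet ⊆ Vq) ∧ (∀ β ∈ A, pubs Vq β ⊆ S)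

def kerT (S : Set Term) (A : Set Assertion) : Set Term := S ∪ varTerms (abvSet A)
def kerE (A : Set Assertion) : Set (Term × Term) := {e | ∃ β ∈ A, e = (β.l, β.r)}
def kerA (A : Set Assertion) : Set Assertion := {γ | ∃ β ∈ A, γ = Assertion.mk [] β.l β.r}

/-- The set of assertions corresponding to a set of equalities. -/
def EtoA (E : Set (Term × Term)) : Set Assertion := {γ | ∃ e ∈ E, γ = Assertion.mk [] e.1 e.2}

/-- `(T;E)` is pure if it is the kernel of some sanitized pair. -/
def isPure (Vq : Set ℕ) (T : Set Term) (E : Set (Term × Term)) : Prop :=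
  ∃ S A, sanitized Vq S A ∧ T = kerT S A ∧ E = kerE A

/-- `(T;E)` is consistent if some ground substitution unifies every equality in `E`. -/
def consistentE (E : Set (Term × Term)) : Prop :=
  ∃ lam : Subst, lam.isGround ∧ ∀ e ∈ E, lam.app e.1 = lam.app e.2

/-- `M`-bounded substitution: every image has at most `M` distinct subterms. -/
def boundedSub (M : ℕ) (μ : Subst) : Prop :=
  ∀ x ∈ μ.dom, (Term.subterms (μ x)).ncard ≤ M



/-! ## Dolev-Yao proof trees -/

inductive DPT : Type
  | ax (t : Term)
  | pair (p q : DPT)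
  | enc (p q : DPT)
  | fst (p : DPT)
  | snd (p : DPT)
  | dec (p q : DPT)

namespace DPT

/-- The conclusion of a DY proof tree, if it is well-formed. -/
def concl (inv : Term → Term) : DPT → Option Term
  | ax t => some t
  | pair p q =>
      match concl inv p, concl inv q with
      | some a, some b => some (Term.pair a b)
      | _, _ => none
  | enc p q =>
      match concl inv p, concl inv q with
      | some a, some b => some (Term.enc a b)
      | _, _ => none
  | fst p =>
      match concl inv p with
      | some (Term.pair a _) => some a
      | _ => none
  | snd p =>
      match concl inv p with
      | some (Term.pair _ b) => some b
      | _ => none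
  | dec p q =>
      match concl inv p, concl inv q with
      | some (Term.enc a k), some k' => if k' = inv k then some a else none
      | _, _ => none

/-- Validity of a DY proof tree from the set `X`. -/
def valid (inv : Term → Term) (X : Set Term) : DPT → Prop
  | ax t => t ∈ X
  | pair p q => valid inv X p ∧ valid inv X q
  | enc p q => valid inv X p ∧ valid inv X q
  | fst p => valid inv X p ∧ ∃ a b, concl inv p = some (Term.pair a b)
  | snd p => valid inv X p ∧ ∃ a b, concl inv p = some (Term.pair a b)
  | dec p q => valid inv X p ∧ valid inv X q ∧
      ∃ a k, concl inv p = some (Term.enc a k) ∧ concl inv q = some (inv k)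

def endsConstructor : DPT → Prop
  | pair _ _ => True
  | enc _ _ => True
  | _ => False

def endsDestructor : DPT → Prop
  | fst _ => True
  | snd _ => True
  | dec _ _ => True
  | _ => False

/-- Normal DY proofs: no constructor conclusion is the major premise of a destructor. -/
def normal : DPT → Prop
  | ax _ => True
  | pair p q => normal p ∧ normal q
  | enc p q => normal p ∧ normal q
  | fst p => normal p ∧ ¬ endsConstructor p
  | snd p => normal p ∧ ¬ endsConstructor p
  | dec p q => normal p ∧ normal q ∧ ¬ endsConstructor p

/-- All terms occurring in a DY proof tree (conclusions of subproofs). -/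
def termSet (inv : Term → Term) : DPT → Set Term
  | ax t => {t}
  | pair p q => {a | concl inv (pair p q) = some a} ∪ termSet inv p ∪ termSet inv q
  | enc p q => {a | concl inv (enc p q) = some a} ∪ termSet inv p ∪ termSet inv q
  | fst p => {a | concl inv (fst p) = some a} ∪ termSet inv p
  | snd p => {a | concl inv (snd p) = some a} ∪ termSet inv p
  | dec p q => {a | concl inv (dec p q) = some a} ∪ termSet inv p ∪ termSet inv q

/-- Typed DY proof w.r.t. a set `G`: every subproof ends in a constructor rule or
has its conclusion in `G`. -/
def typed (inv : Term → Term) (G : Set Term) : DPT → Prop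
  | ax t => t ∈ G
  | pair p q => typed inv G p ∧ typed inv G q
  | enc p q => typed inv G p ∧ typed inv G q
  | fst p => typed inv G p ∧ ∀ a, concl inv (fst p) = some a → a ∈ G
  | snd p => typed inv G p ∧ ∀ a, concl inv (snd p) = some a → a ∈ G
  | dec p q => typed inv G p ∧ typed inv G q ∧ ∀ a, concl inv (dec p q) = some a → a ∈ G

end DPT

/-! ## Equality proof trees (the system ⊢eq), with n-ary trans -/

inductive EPT : Type
  | ax (t u : Term)
  | eq (t : Term) (d : DPT)
  | sym (t u : Term) (p : EPT)
  | trans (t u : Term) (ps : List EPT)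
  | consPair (t0 u0 t1 u1 : Term) (p q : EPT)
  | consEnc (t0 u0 t1 u1 : Term) (p q : EPT)
  | projPairFst (t0 t1 u0 u1 : Term) (p : EPT)
  | projPairSnd (t0 t1 u0 u1 : Term) (p : EPT)
  | projEncFst (t0 t1 u0 u1 : Term) (p : EPT)
  | projEncSnd (t0 t1 u0 u1 : Term) (p : EPT)

namespace EPT

/-- The conclusion `t ⋈ u` of an equality proof tree. -/
def concl : EPT → Term × Term
  | ax t u => (t, u)
  | eq t _ => (t, t)
  | sym t u _ => (t, u)
  | trans t u _ => (t, u)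
  | consPair t0 u0 t1 u1 _ _ => (Term.pair t0 t1, Term.pair u0 u1)
  | consEnc t0 u0 t1 u1 _ _ => (Term.enc t0 t1, Term.enc u0 u1)
  | projPairFst t0 _ u0 _ _ => (t0, u0)
  | projPairSnd _ t1 _ u1 _ => (t1, u1)
  | projEncFst t0 _ u0 _ _ => (t0, u0)
  | projEncSnd _ t1 _ u1 _ => (t1, u1)

/-- Immediate subproof relation. -/
inductive Sub : EPT → EPT → Prop
  | sym {t u p} : Sub p (EPT.sym t u p)
  | trans {t u ps p} : p ∈ ps → Sub p (EPT.trans t u ps)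
  | consPairL {t0 u0 t1 u1 p q} : Sub p (EPT.consPair t0 u0 t1 u1 p q)
  | consPairR {t0 u0 t1 u1 p q} : Sub q (EPT.consPair t0 u0 t1 u1 p q)
  | consEncL {t0 u0 t1 u1 p q} : Sub p (EPT.consEnc t0 u0 t1 u1 p q)
  | consEncR {t0 u0 t1 u1 p q} : Sub q (EPT.consEnc t0 u0 t1 u1 p q)
  | projPairFst {t0 t1 u0 u1 p} : Sub p (EPT.projPairFst t0 t1 u0 u1 p)
  | projPairSnd {t0 t1 u0 u1 p} : Sub p (EPT.projPairSnd t0 t1 u0 u1 p)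
  | projEncFst {t0 t1 u0 u1 p} : Sub p (EPT.projEncFst t0 t1 u0 u1 p)
  | projEncSnd {t0 t1 u0 u1 p} : Sub p (EPT.projEncSnd t0 t1 u0 u1 p)

/-- `Subproof p q`: `p` is a (not necessarily proper) subproof of `q`. -/
def Subproof : EPT → EPT → Prop := Relation.ReflTransGen Sub

def isAx : EPT → Prop
  | ax _ _ => True
  | _ => False

def isTrans : EPT → Prop
  | trans _ _ _ => True
  | _ => False

def isCons : EPT → Prop
  | consPair _ _ _ _ _ _ => True
  | consEnc _ _ _ _ _ _ => True
  | _ => False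

def isProj : EPT → Prop
  | projPairFst _ _ _ _ _ => True
  | projPairSnd _ _ _ _ _ => True
  | projEncFst _ _ _ _ _ => True
  | projEncSnd _ _ _ _ _ => True
  | _ => False

/-- The ⊢eq proof contains an occurrence of the cons rule. -/
def containsCons (π : EPT) : Prop := ∃ π', Subproof π' π ∧ isCons π'

/-- Local validity of the last rule of an equality proof tree. -/
def localValid (inv : Term → Term) (T : Set Term) (E : Set (Term × Term)) : EPT → Prop
  | ax t u => (t, u) ∈ E
  | eq t d => DPT.valid inv T d ∧ DPT.concl inv d = some t
  | sym t u p => concl p = (u, t)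
  | trans t u ps =>
      ps ≠ [] ∧ (ps.head?.map fun p => (concl p).1) = some t ∧
      (ps.getLast?.map fun p => (concl p).2) = some u ∧
      List.Chain' (fun p q => (concl p).2 = (concl q).1) ps
  | consPair t0 u0 t1 u1 p q => concl p = (t0, u0) ∧ concl q = (t1, u1)
  | consEnc t0 u0 t1 u1 p q => concl p = (t0, u0) ∧ concl q = (t1, u1)
  | projPairFst t0 t1 u0 u1 p => concl p = (Term.pair t0 t1, Term.pair u0 u1) ∧
      dy inv T t0 ∧ dy inv T t1 ∧ dy inv T u0 ∧ dy inv T u1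
  | projPairSnd t0 t1 u0 u1 p => concl p = (Term.pair t0 t1, Term.pair u0 u1) ∧
      dy inv T t0 ∧ dy inv T t1 ∧ dy inv T u0 ∧ dy inv T u1
  | projEncFst t0 t1 u0 u1 p => concl p = (Term.enc t0 t1, Term.enc u0 u1) ∧
      dy inv T t0 ∧ dy inv T t1 ∧ dy inv T u0 ∧ dy inv T u1
  | projEncSnd t0 t1 u0 u1 p => concl p = (Term.enc t0 t1, Term.enc u0 u1) ∧
      dy inv T t0 ∧ dy inv T t1 ∧ dy inv T u0 ∧ dy inv T u1

/-- Validity of an equality proof tree from `(T;E)`. -/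
def valid (inv : Term → Term) (T : Set Term) (E : Set (Term × Term)) (π : EPT) : Prop :=
  ∀ π', Subproof π' π → localValid inv T E π'

/-- Local normality conditions for the last rule. -/
def localNormal : EPT → Prop
  | ax _ _ => True
  | eq _ d => DPT.normal d ∧ DPT.endsDestructor d
  | sym _ _ p => isAx p
  | trans _ _ ps =>
      (∀ p ∈ ps, ¬ isTrans p ∧ (concl p).1 ≠ (concl p).2) ∧
      List.Chain' (fun p q => ¬ (isCons p ∧ isCons q)) ps
  | consPair _ _ _ _ _ _ => True
  | consEnc _ _ _ _ _ _ => True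
  | projPairFst _ _ _ _ p => ¬ containsCons p
  | projPairSnd _ _ _ _ p => ¬ containsCons p
  | projEncFst _ _ _ _ p => ¬ containsCons p
  | projEncSnd _ _ _ _ p => ¬ containsCons p

/-- A normal ⊢eq proof. -/
def normalP (π : EPT) : Prop := ∀ π', Subproof π' π → localNormal π'

/-- The DY subproof attached to an `eq` node, if any. -/
def dSub : EPT → Option DPT
  | eq _ d => some d
  | _ => none

/-- All terms occurring in an ⊢eq proof: the terms of the conclusions of all
subproofs, including the DY subproofs. -/
def termSet (inv : Term → Term) (π : EPT) : Set Term :=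
  {a | ∃ π', Subproof π' π ∧
    (a = (concl π').1 ∨ a = (concl π').2 ∨
      ∃ d, dSub π' = some d ∧ a ∈ DPT.termSet inv d)}

/-- Typed ⊢eq proof w.r.t. a set `Typ` of typed terms: every subproof contains
cons, or proves a trivial equality, or has typed conclusion terms. -/
def typedP (Typ : Set Term) (π : EPT) : Prop :=
  ∀ π', Subproof π' π →
    containsCons π' ∨ (concl π').1 = (concl π').2 ∨
      ((concl π').1 ∈ Typ ∧ (concl π').2 ∈ Typ)

end EPT



/-! ## The fixed run setting -/

/-- A fixed run of a protocol: at step `i` (for `1 ≤ i ≤ n`) the honest agent `uᵢ`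
receives the assertion `β i` from the intruder and sends the assertion `α i`;
`(T i; E i)` and `(U i; F i)` are the kernels of the knowledge states of the
intruder and of `uᵢ`; `σ` is the ground substitution of the run, `μ i`/`θ i` the
witness substitutions, `ω` their composition, and `m` the spare name. -/
structure RunSetting : Type where
  inv : Term → Term
  Vq : Set ℕ
  n : ℕ
  β : ℕ → Assertion
  α : ℕ → Assertion
  T : ℕ → Set Term
  E : ℕ → Set (Term × Term)
  U : ℕ → Set Term
  F : ℕ → Set (Term × Term)
  σ : Subst
  μ : ℕ → Subst
  θ : ℕ → Subst
  ω : Subst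
  m : ℕ
  -- well-formedness of the communicated assertions
  hβbv : ∀ i, 1 ≤ i → i ≤ n → (β i).bvSet ⊆ Vq
  hαbv : ∀ i, 1 ≤ i → i ≤ n → (α i).bvSet ⊆ Vq
  hβfv : ∀ i, 1 ≤ i → i ≤ n → (β i).fv ∩ Vq = ∅
  hαfv : ∀ i, 1 ≤ i → i ≤ n → (α i).fv ∩ Vq = ∅
  -- σ is ground, defined on the intruder variables of the run, and fixes Vq
  hσVq : ∀ x ∈ Vq, σ x = Term.var x
  hσground : ∀ x ∈ σ.dom, (σ x).ground
  -- evolution of the kernels of the intruder's knowledge state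
  hT0 : ∀ t ∈ T 0, t.ground
  hE0 : E 0 = ∅
  hTmono : ∀ i, T i ⊆ T (i + 1)
  hEmono : ∀ i, E i ⊆ E (i + 1)
  hTstep : ∀ i, 1 ≤ i → i ≤ n →
    T i = T (i - 1) ∪ pubs Vq (α i) ∪ varTerms (α i).bvSet
  hEstep : ∀ i, 1 ≤ i → i ≤ n → E i = E (i - 1) ∪ {((α i).l, (α i).r)}
  -- knowledge states are finite
  hTfin : ∀ i, i ≤ n → (T i).Finite
  hEfin : ∀ i, i ≤ n → (E i).Finite
  hUfin : ∀ i, i ≤ n → (U i).Finite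
  hFfin : ∀ i, i ≤ n → (F i).Finite
  -- provenance of honest agents' kernels
  hUmem : ∀ i, 1 ≤ i → i ≤ n → ∀ t ∈ U i,
    (∃ x ∈ Vq, t = Term.var x) ∨ t.tvars ⊆ σ.dom
  hFmem : ∀ i, 1 ≤ i → i ≤ n → ∀ e ∈ F i,
    ∃ j, 1 ≤ j ∧ j ≤ i ∧ e = ((β j).l, (β j).r)
  -- variables sent by honest agents were received earlier (Observation 2 of the paper)
  hfvEarlier : ∀ i, 1 ≤ i → i ≤ n → ∀ x ∈ (α i).fv,
    ∃ j, 1 ≤ j ∧ j ≤ i ∧ x ∈ (β j).fv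
  -- witness substitutions and the derivability conditions of the run
  hμdom : ∀ i, 1 ≤ i → i ≤ n → (μ i).dom ⊆ (β i).bvSet
  hθdom : ∀ i, 1 ≤ i → i ≤ n → (θ i).dom ⊆ (α i).bvSet
  hμdy : ∀ i, 1 ≤ i → i ≤ n → ∀ x ∈ (μ i).dom,
    dy inv (Subst.app σ '' T (i - 1)) (μ i x)
  hμeq : ∀ i, 1 ≤ i → i ≤ n →
    eqdrv inv (Subst.app σ '' T (i - 1)) (pairImg σ (E (i - 1)))
      (σ.app ((μ i).app (β i).l)) (σ.app ((μ i).app (β i).r))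
  hθdy : ∀ i, 1 ≤ i → i ≤ n → ∀ x ∈ (θ i).dom,
    dy inv (Subst.app σ '' U i) (θ i x)
  hθeq : ∀ i, 1 ≤ i → i ≤ n →
    eqdrv inv (Subst.app σ '' U i) (pairImg σ (F i))
      (σ.app ((θ i).app (α i).l)) (σ.app ((θ i).app (α i).r))
  -- ω is the composition σμ₁θ₁…μₙθₙ
  hωσ : ∀ x, ω.app (σ x) = ω x
  hωμ : ∀ i, 1 ≤ i → i ≤ n → ∀ x, ω.app ((μ i) x) = ω x
  hωθ : ∀ i, 1 ≤ i → i ≤ n → ∀ x, ω.app ((θ i) x) = ω x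
  hωground : ∀ x ∈ ω.dom, (ω x).ground
  hωT : ∀ i, i ≤ n → ∀ t ∈ T i ∪ U i, (ω.app t).ground
  hωE : ∀ i, i ≤ n → ∀ e ∈ E i ∪ F i, (ω.app e.1).ground ∧ (ω.app e.2).ground
  -- the spare name m
  hm : Term.name m ∈ T 0
  hmβ : ∀ i, 1 ≤ i → i ≤ n →
    Term.name m ∉ (β i).subterms ∪ (α i).subterms
  hmμ : ∀ i, 1 ≤ i → i ≤ n → ∀ x ∈ (μ i).dom, Term.name m ∉ (μ i x).subterms
  hmθ : ∀ i, 1 ≤ i → i ≤ n → ∀ x ∈ (θ i).dom, Term.name m ∉ (θ i x).subterms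

namespace RunSetting

variable (R : RunSetting)

/-- The public terms of the `i`-th intruder send. -/
def IT (i : ℕ) : Set Term := pubs R.Vq (R.β i)

/-- The public terms of the `i`-th honest agent send. -/
def HT (i : ℕ) : Set Term := pubs R.Vq (R.α i)

/-- The type set 𝒞 of the run. -/
def C : Set Term :=
  ⋃ i ∈ Set.Iic R.n, (sSubterms (R.T i ∪ R.U i) ∪ pairSubterms (R.E i ∪ R.F i))

/-- The type set 𝒟 = 𝒞 ∖ 𝒱 of the run. -/
def D : Set Term := R.C \ Set.range Term.var

/-- A variable is minimal if its ω-image coincides with the ω-image of no term of 𝒟. -/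
def minimal (x : ℕ) : Prop := x ∈ R.ω.dom ∧ ¬ ∃ t ∈ R.D, R.ω.app t = R.ω x

/-- A term is zappable if it ω-unifies with some minimal variable. -/
def zappable (t : Term) : Prop := ∃ x, R.minimal x ∧ R.ω.app t = R.ω x

/-- The zap of a term: zappable terms get replaced by the spare name `m`. -/
noncomputable def zap : Term → Term
  | Term.var x => Term.var x
  | Term.name k => if R.zappable (Term.name k) then Term.name R.m else Term.name k
  | Term.pair a b =>
      if R.zappable (Term.pair a b) then Term.name R.m
      else Term.pair (zap a) (zap b)
  | Term.enc a b =>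
      if R.zappable (Term.enc a b) then Term.name R.m
      else Term.enc (zap a) (zap b)

/-- The small substitution λ* corresponding to λ. -/
noncomputable def star (lam : Subst) : Subst := fun x => R.zap (lam x)

/-- The set of typed terms: σ(𝒟) ∪ ω(𝒞) ∪ 𝒱_q. -/
def typedSet : Set Term :=
  Subst.app R.σ '' R.D ∪ Subst.app R.ω '' R.C ∪ varTerms R.Vq

/-- A typed term. -/
def typedTerm (t : Term) : Prop := t ∈ R.typedSet

end RunSetting




/-! ## Auxiliary lemmas -/

namespace Term

lemma mem_subterms_self (t : Term) : t ∈ t.subterms := by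
  cases t <;> simp [subterms]

lemma subterms_subset {s t : Term} (h : s ∈ t.subterms) : s.subterms ⊆ t.subterms := by
  induction t with
  | name n => simp only [subterms, Set.mem_singleton_iff] at h; subst h; exact subset_rfl
  | var x => simp only [subterms, Set.mem_singleton_iff] at h; subst h; exact subset_rfl
  | pair a b iha ihb =>
      simp only [subterms, Set.mem_insert_iff, Set.mem_union] at h
      rcases h with h | h | h
      · subst h; exact subset_rfl
      · exact (iha h).trans (fun z hz => by simp [subterms]; exact Or.inr (Or.inl hz))
      · exact (ihb h).trans (fun z hz => by simp [subterms]; exact Or.inr (Or.inr hz))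
  | enc a b iha ihb =>
      simp only [subterms, Set.mem_insert_iff, Set.mem_union] at h
      rcases h with h | h | h
      · subst h; exact subset_rfl
      · exact (iha h).trans (fun z hz => by simp [subterms]; exact Or.inr (Or.inl hz))
      · exact (ihb h).trans (fun z hz => by simp [subterms]; exact Or.inr (Or.inr hz))

lemma tvars_subset_of_subterm {s t : Term} (h : s ∈ t.subterms) : s.tvars ⊆ t.tvars := by
  induction t with
  | name n => simp only [subterms, Set.mem_singleton_iff] at h; subst h; exact subset_rfl
  | var x => simp only [subterms, Set.mem_singleton_iff] at h; subst h; exact subset_rfl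
  | pair a b iha ihb =>
      simp only [subterms, Set.mem_insert_iff, Set.mem_union] at h
      rcases h with h | h | h
      · subst h; exact subset_rfl
      · exact (iha h).trans (by simp only [tvars]; exact Set.subset_union_left)
      · exact (ihb h).trans (by simp only [tvars]; exact Set.subset_union_right)
  | enc a b iha ihb =>
      simp only [subterms, Set.mem_insert_iff, Set.mem_union] at h
      rcases h with h | h | h
      · subst h; exact subset_rfl
      · exact (iha h).trans (by simp only [tvars]; exact Set.subset_union_left)
      · exact (ihb h).trans (by simp only [tvars]; exact Set.subset_union_right)

lemma pair_left_mem_subterms {a b : Term} : a ∈ (Term.pair a b).subterms := by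
  simp [subterms]; exact Or.inr (Or.inl (mem_subterms_self a))

lemma pair_right_mem_subterms {a b : Term} : b ∈ (Term.pair a b).subterms := by
  simp [subterms]; exact Or.inr (Or.inr (mem_subterms_self b))

lemma enc_left_mem_subterms {a b : Term} : a ∈ (Term.enc a b).subterms := by
  simp [subterms]; exact Or.inr (Or.inl (mem_subterms_self a))

lemma enc_right_mem_subterms {a b : Term} : b ∈ (Term.enc a b).subterms := by
  simp [subterms]; exact Or.inr (Or.inr (mem_subterms_self b))

lemma ground_pair {a b : Term} : (Term.pair a b).ground ↔ a.ground ∧ b.ground := by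
  simp [ground, tvars, Set.union_empty_iff]

lemma ground_enc {a b : Term} : (Term.enc a b).ground ↔ a.ground ∧ b.ground := by
  simp [ground, tvars, Set.union_empty_iff]

lemma not_ground_var (x : ℕ) : ¬ (Term.var x).ground := by
  simp [ground, tvars]

end Term

lemma Subst.app_ground {σ : Subst} {t : Term} (h : t.ground) : σ.app t = t := by
  induction t with
  | name n => rfl
  | var x => exact absurd h (Term.not_ground_var x)
  | pair a b iha ihb =>
      rw [Term.ground_pair] at h
      simp [Subst.app, iha h.1, ihb h.2]
  | enc a b iha ihb =>
      rw [Term.ground_enc] at h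
      simp [Subst.app, iha h.1, ihb h.2]

lemma mem_tvars_app {σ : Subst} {t : Term} {x : ℕ} (h : x ∈ (σ.app t).tvars) :
    ∃ y ∈ t.tvars, x ∈ (σ y).tvars := by
  induction t with
  | name n => simp [Subst.app, Term.tvars] at h
  | var y => exact ⟨y, by simp [Term.tvars], h⟩
  | pair a b iha ihb =>
      simp only [Subst.app, Term.tvars, Set.mem_union] at h
      rcases h with h | h
      · obtain ⟨y, hy, hx⟩ := iha h
        exact ⟨y, by simp [Term.tvars]; exact Or.inl hy, hx⟩
      · obtain ⟨y, hy, hx⟩ := ihb h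
        exact ⟨y, by simp [Term.tvars]; exact Or.inr hy, hx⟩
  | enc a b iha ihb =>
      simp only [Subst.app, Term.tvars, Set.mem_union] at h
      rcases h with h | h
      · obtain ⟨y, hy, hx⟩ := iha h
        exact ⟨y, by simp [Term.tvars]; exact Or.inl hy, hx⟩
      · obtain ⟨y, hy, hx⟩ := ihb h
        exact ⟨y, by simp [Term.tvars]; exact Or.inr hy, hx⟩

lemma tvars_app_preserve {σ : Subst} {t : Term} {y : ℕ} (hy : y ∈ t.tvars)
    (h : σ y = Term.var y) : y ∈ (σ.app t).tvars := by
  induction t with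
  | name n => simp [Term.tvars] at hy
  | var z =>
      simp only [Term.tvars, Set.mem_singleton_iff] at hy
      subst hy
      simp [Subst.app, h, Term.tvars]
  | pair a b iha ihb =>
      simp only [Term.tvars, Set.mem_union] at hy
      simp only [Subst.app, Term.tvars, Set.mem_union]
      rcases hy with hy | hy
      · exact Or.inl (iha hy)
      · exact Or.inr (ihb hy)
  | enc a b iha ihb =>
      simp only [Term.tvars, Set.mem_union] at hy
      simp only [Subst.app, Term.tvars, Set.mem_union]
      rcases hy with hy | hy
      · exact Or.inl (iha hy)
      · exact Or.inr (ihb hy)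

lemma app_app {lam mu : Subst} (h : ∀ x, lam.app (mu x) = lam x) (t : Term) :
    lam.app (mu.app t) = lam.app t := by
  induction t with
  | name n => rfl
  | var x => exact h x
  | pair a b iha ihb => simp [Subst.app, iha, ihb]
  | enc a b iha ihb => simp [Subst.app, iha, ihb]

lemma mem_sVars {X : Set Term} {x : ℕ} : x ∈ sVars X ↔ ∃ t ∈ X, x ∈ t.tvars := by
  simp [sVars]

/-- Variables of pairs of terms. -/
def pVars (E : Set (Term × Term)) : Set ℕ := ⋃ e ∈ E, (e.1.tvars ∪ e.2.tvars)

lemma mem_pVars {E : Set (Term × Term)} {x : ℕ} :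
    x ∈ pVars E ↔ ∃ e ∈ E, x ∈ e.1.tvars ∪ e.2.tvars := by
  simp [pVars]

lemma dy_tvars {inv : Term → Term} {X : Set Term} {t : Term} (h : dy inv X t) :
    t.tvars ⊆ sVars X := by
  induction h with
  | ax ht => exact fun x hx => mem_sVars.2 ⟨_, ht, hx⟩
  | pair _ _ iha ihb =>
      intro x hx
      simp only [Term.tvars, Set.mem_union] at hx
      rcases hx with hx | hx
      · exact iha hx
      · exact ihb hx
  | enc _ _ iha ihb =>
      intro x hx
      simp only [Term.tvars, Set.mem_union] at hx
      rcases hx with hx | hx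
      · exact iha hx
      · exact ihb hx
  | fst _ ih => exact fun x hx => ih (by simp [Term.tvars]; exact Or.inl hx)
  | snd _ ih => exact fun x hx => ih (by simp [Term.tvars]; exact Or.inr hx)
  | dec _ _ ih _ => exact fun x hx => ih (by simp [Term.tvars]; exact Or.inl hx)

lemma eqdrv_tvars {inv : Term → Term} {T : Set Term} {E : Set (Term × Term)} {t u : Term}
    (h : eqdrv inv T E t u) :
    t.tvars ⊆ sVars T ∪ pVars E ∧ u.tvars ⊆ sVars T ∪ pVars E := by
  induction h with
  | ax he =>
      constructor <;> intro x hx <;>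
        exact Or.inr (mem_pVars.2 ⟨_, he, by simp [hx]⟩)
  | eq hd =>
      have h1 := dy_tvars hd
      exact ⟨h1.trans Set.subset_union_left, h1.trans Set.subset_union_left⟩
  | sym _ ih => exact ⟨ih.2, ih.1⟩
  | trans _ _ ih1 ih2 => exact ⟨ih1.1, ih2.2⟩
  | consPair _ _ ih1 ih2 =>
      constructor <;> intro x hx <;> simp only [Term.tvars, Set.mem_union] at hx
      · rcases hx with hx | hx
        · exact ih1.1 hx
        · exact ih2.1 hx
      · rcases hx with hx | hx
        · exact ih1.2 hx
        · exact ih2.2 hx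
  | consEnc _ _ ih1 ih2 =>
      constructor <;> intro x hx <;> simp only [Term.tvars, Set.mem_union] at hx
      · rcases hx with hx | hx
        · exact ih1.1 hx
        · exact ih2.1 hx
      · rcases hx with hx | hx
        · exact ih1.2 hx
        · exact ih2.2 hx
  | projPairFst _ _ _ _ _ ih =>
      exact ⟨fun x hx => ih.1 (by simp [Term.tvars]; exact Or.inl hx),
             fun x hx => ih.2 (by simp [Term.tvars]; exact Or.inl hx)⟩
  | projPairSnd _ _ _ _ _ ih =>
      exact ⟨fun x hx => ih.1 (by simp [Term.tvars]; exact Or.inr hx),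
             fun x hx => ih.2 (by simp [Term.tvars]; exact Or.inr hx)⟩
  | projEncFst _ _ _ _ _ ih =>
      exact ⟨fun x hx => ih.1 (by simp [Term.tvars]; exact Or.inl hx),
             fun x hx => ih.2 (by simp [Term.tvars]; exact Or.inl hx)⟩
  | projEncSnd _ _ _ _ _ ih =>
      exact ⟨fun x hx => ih.1 (by simp [Term.tvars]; exact Or.inr hx),
             fun x hx => ih.2 (by simp [Term.tvars]; exact Or.inr hx)⟩

lemma eqdrv_sound {inv : Term → Term} {T : Set Term} {E : Set (Term × Term)} {t u : Term}
    (lam : Subst) (hE : ∀ e ∈ E, lam.app e.1 = lam.app e.2)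
    (h : eqdrv inv T E t u) : lam.app t = lam.app u := by
  induction h with
  | ax he => exact hE _ he
  | eq _ => rfl
  | sym _ ih => exact ih.symm
  | trans _ _ ih1 ih2 => exact ih1.trans ih2
  | consPair _ _ ih1 ih2 => simp [Subst.app, ih1, ih2]
  | consEnc _ _ ih1 ih2 => simp [Subst.app, ih1, ih2]
  | projPairFst _ _ _ _ _ ih =>
      simp only [Subst.app, Term.pair.injEq] at ih; exact ih.1
  | projPairSnd _ _ _ _ _ ih =>
      simp only [Subst.app, Term.pair.injEq] at ih; exact ih.2
  | projEncFst _ _ _ _ _ ih =>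
      simp only [Subst.app, Term.enc.injEq] at ih; exact ih.1
  | projEncSnd _ _ _ _ _ ih =>
      simp only [Subst.app, Term.enc.injEq] at ih; exact ih.2



namespace RunSetting

variable (R : RunSetting)

/-- The "safe" variables of the run. -/
def W : Set ℕ := R.Vq ∪ R.σ.dom

lemma omega_sigma (t : Term) : R.ω.app (R.σ.app t) = R.ω.app t := app_app R.hωσ t

lemma omega_idem (t : Term) : R.ω.app (R.ω.app t) = R.ω.app t := by
  induction t with
  | name n => rfl
  | var x =>
      show R.ω.app (R.ω x) = R.ω x
      by_cases h : R.ω x = Term.var x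
      · rw [h]; simp [Subst.app, h]
      · exact Subst.app_ground (R.hωground x h)
  | pair a b iha ihb => simp [Subst.app, iha, ihb]
  | enc a b iha ihb => simp [Subst.app, iha, ihb]

lemma tvars_sigma_app {t : Term} (ht : t.tvars ⊆ R.W) : (R.σ.app t).tvars ⊆ R.Vq := by
  intro x hx
  obtain ⟨y, hy, hxy⟩ := mem_tvars_app hx
  rcases ht hy with h | h
  · rw [R.hσVq y h] at hxy
    simp only [Term.tvars, Set.mem_singleton_iff] at hxy
    subst hxy; exact h
  · have hg := R.hσground y h
    rw [Term.ground] at hg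
    rw [hg] at hxy
    exact absurd hxy (Set.notMem_empty x)

lemma sVars_image {X : Set Term} (hX : sVars X ⊆ R.W) :
    sVars (Subst.app R.σ '' X) ⊆ R.Vq := by
  intro x hx
  rw [mem_sVars] at hx
  obtain ⟨t, ⟨a, ha, rfl⟩, hxt⟩ := hx
  exact R.tvars_sigma_app (fun y hy => hX (mem_sVars.2 ⟨a, ha, hy⟩)) hxt

lemma pVars_image {E : Set (Term × Term)} (hE : pVars E ⊆ R.W) :
    pVars (pairImg R.σ E) ⊆ R.Vq := by
  intro x hx
  rw [mem_pVars] at hx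
  obtain ⟨e, ⟨e', he', rfl⟩, hxe⟩ := hx
  rcases hxe with hxe | hxe
  · exact R.tvars_sigma_app
      (fun y hy => hE (mem_pVars.2 ⟨e', he', Or.inl hy⟩)) hxe
  · exact R.tvars_sigma_app
      (fun y hy => hE (mem_pVars.2 ⟨e', he', Or.inr hy⟩)) hxe

lemma bad_var_mem {lam : Subst} (hdom : lam.dom ⊆ R.Vq) {t : Term} {x : ℕ}
    (hx : x ∈ t.tvars) (hW : x ∉ R.W) : x ∈ (R.σ.app (lam.app t)).tvars := by
  have h1 : lam x = Term.var x := by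
    by_contra h; exact hW (Or.inl (hdom h))
  have h2 : R.σ x = Term.var x := by
    by_contra h; exact hW (Or.inr h)
  exact tvars_app_preserve (tvars_app_preserve hx h1) h2

lemma sVars_sigmaU {j : ℕ} (h1 : 1 ≤ j) (h2 : j ≤ R.n) :
    sVars (Subst.app R.σ '' R.U j) ⊆ R.Vq := by
  intro x hx
  rw [mem_sVars] at hx
  obtain ⟨t, ⟨a, ha, rfl⟩, hxt⟩ := hx
  rcases R.hUmem j h1 h2 a ha with ⟨z, hz, rfl⟩ | hsub
  · rw [show R.σ.app (Term.var z) = R.σ z from rfl, R.hσVq z hz] at hxt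
    simp only [Term.tvars, Set.mem_singleton_iff] at hxt
    subst hxt; exact hz
  · obtain ⟨y, hy, hxy⟩ := mem_tvars_app hxt
    have hg := R.hσground y (hsub hy)
    rw [Term.ground] at hg
    rw [hg] at hxy
    exact absurd hxy (Set.notMem_empty x)

/-- Variables of the run data are in `Vq ∪ dom σ`. -/
lemma vars_run : ∀ j : ℕ,
    (j ≤ R.n → sVars (R.T j) ⊆ R.W ∧ ∀ e ∈ R.E j, e.1.tvars ∪ e.2.tvars ⊆ R.W)
    ∧ (1 ≤ j → j ≤ R.n →
        ((R.β j).l.tvars ∪ (R.β j).r.tvars ⊆ R.W)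
        ∧ ((R.α j).l.tvars ∪ (R.α j).r.tvars ⊆ R.W)) := by
  intro j
  induction j using Nat.strong_induction_on with
  | _ j IH =>
    have hβα : 1 ≤ j → j ≤ R.n →
        ((R.β j).l.tvars ∪ (R.β j).r.tvars ⊆ R.W)
        ∧ ((R.α j).l.tvars ∪ (R.α j).r.tvars ⊆ R.W) := by
      intro h1 h2
      have hprev := (IH (j-1) (by omega)).1 (by omega)
      have hTv : sVars (Subst.app R.σ '' R.T (j-1)) ⊆ R.Vq := R.sVars_image hprev.1
      have hEv : pVars (pairImg R.σ (R.E (j-1))) ⊆ R.Vq := by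
        apply R.pVars_image
        intro x hx
        rw [mem_pVars] at hx
        obtain ⟨e, he, hxe⟩ := hx
        exact hprev.2 e he hxe
      have hβ : (R.β j).l.tvars ∪ (R.β j).r.tvars ⊆ R.W := by
        intro x hx
        by_contra hW
        have hdom : (R.μ j).dom ⊆ R.Vq := (R.hμdom j h1 h2).trans (R.hβbv j h1 h2)
        have htv := eqdrv_tvars (R.hμeq j h1 h2)
        have hmem : x ∈ R.Vq := by
          rcases hx with hx | hx
          · rcases htv.1 (R.bad_var_mem hdom hx hW) with h | h
            · exact hTv h
            · exact hEv h
          · rcases htv.2 (R.bad_var_mem hdom hx hW) with h | h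
            · exact hTv h
            · exact hEv h
        exact hW (Or.inl hmem)
      refine ⟨hβ, ?_⟩
      have hFv : pVars (pairImg R.σ (R.F j)) ⊆ R.Vq := by
        apply R.pVars_image
        intro x hx
        rw [mem_pVars] at hx
        obtain ⟨e, he, hxe⟩ := hx
        obtain ⟨k, hk1, hk2, rfl⟩ := R.hFmem j h1 h2 e he
        rcases eq_or_lt_of_le hk2 with hkj | hkj
        · subst hkj; exact hβ hxe
        · exact ((IH k hkj).2 hk1 (by omega)).1 hxe
      have hUv := R.sVars_sigmaU h1 h2
      intro x hx
      by_contra hW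
      have hdom : (R.θ j).dom ⊆ R.Vq := (R.hθdom j h1 h2).trans (R.hαbv j h1 h2)
      have htv := eqdrv_tvars (R.hθeq j h1 h2)
      have hmem : x ∈ R.Vq := by
        rcases hx with hx | hx
        · rcases htv.1 (R.bad_var_mem hdom hx hW) with h | h
          · exact hUv h
          · exact hFv h
        · rcases htv.2 (R.bad_var_mem hdom hx hW) with h | h
          · exact hUv h
          · exact hFv h
      exact hW (Or.inl hmem)
    refine ⟨?_, hβα⟩
    intro h2
    rcases Nat.eq_zero_or_pos j with hj0 | hj1
    · subst hj0
      constructor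
      · intro x hx
        rw [mem_sVars] at hx
        obtain ⟨t, ht, hxt⟩ := hx
        have := R.hT0 t ht
        rw [Term.ground] at this
        rw [this] at hxt
        exact absurd hxt (Set.notMem_empty x)
      · rw [R.hE0]; intro e he; exact absurd he (Set.notMem_empty e)
    · have hprev := (IH (j-1) (by omega)).1 (by omega)
      have hba := hβα hj1 h2
      constructor
      · rw [R.hTstep j hj1 h2]
        intro x hx
        rw [mem_sVars] at hx
        obtain ⟨t, ht, hxt⟩ := hx
        rcases ht with (ht | ht) | ht
        · exact hprev.1 (mem_sVars.2 ⟨t, ht, hxt⟩)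
        · have hsub : t ∈ (R.α j).subterms := ht.1
          have : t.tvars ⊆ (R.α j).l.tvars ∪ (R.α j).r.tvars := by
            rcases hsub with hs | hs
            · exact (Term.tvars_subset_of_subterm hs).trans Set.subset_union_left
            · exact (Term.tvars_subset_of_subterm hs).trans Set.subset_union_right
          exact hba.2 (this hxt)
        · obtain ⟨z, hz, rfl⟩ := ht
          simp only [Term.tvars, Set.mem_singleton_iff] at hxt
          subst hxt
          exact Or.inl (R.hαbv j hj1 h2 hz)
      · rw [R.hEstep j hj1 h2]
        intro e he
        rcases he with he | he
        · exact hprev.2 e he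
        · rw [Set.mem_singleton_iff] at he
          subst he
          exact hba.2

/-- The equalities of the run are trivialized by ω. -/
lemma omega_run : ∀ j : ℕ,
    (j ≤ R.n → ∀ e ∈ R.E j, R.ω.app e.1 = R.ω.app e.2)
    ∧ (1 ≤ j → j ≤ R.n → R.ω.app (R.β j).l = R.ω.app (R.β j).r) := by
  intro j
  induction j using Nat.strong_induction_on with
  | _ j IH =>
    have hβ : 1 ≤ j → j ≤ R.n → R.ω.app (R.β j).l = R.ω.app (R.β j).r := by
      intro h1 h2
      have hEtriv : ∀ e ∈ pairImg R.σ (R.E (j-1)), R.ω.app e.1 = R.ω.app e.2 := by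
        rintro e ⟨e', he', rfl⟩
        have := (IH (j-1) (by omega)).1 (by omega) e' he'
        simpa [R.omega_sigma] using this
      have hs := eqdrv_sound R.ω hEtriv (R.hμeq j h1 h2)
      have key : ∀ t, R.ω.app (R.σ.app ((R.μ j).app t)) = R.ω.app t := by
        intro t
        rw [R.omega_sigma, app_app (R.hωμ j h1 h2)]
      rwa [key, key] at hs
    refine ⟨?_, hβ⟩
    intro h2 e he
    rcases Nat.eq_zero_or_pos j with hj0 | hj1
    · subst hj0; rw [R.hE0] at he; exact absurd he (Set.notMem_empty e)
    · rw [R.hEstep j hj1 h2] at he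
      rcases he with he | he
      · exact (IH (j-1) (by omega)).1 (by omega) e he
      · rw [Set.mem_singleton_iff] at he
        subst he
        have hFtriv : ∀ e ∈ pairImg R.σ (R.F j), R.ω.app e.1 = R.ω.app e.2 := by
          rintro e ⟨e', he', rfl⟩
          obtain ⟨k, hk1, hk2, rfl⟩ := R.hFmem j hj1 h2 e' he'
          have hβk : R.ω.app (R.β k).l = R.ω.app (R.β k).r := by
            rcases eq_or_lt_of_le hk2 with hkj | hkj
            · subst hkj; exact hβ hk1 h2
            · exact (IH k hkj).2 hk1 (by omega)
          simpa [R.omega_sigma] using hβk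
        have hs := eqdrv_sound R.ω hFtriv (R.hθeq j hj1 h2)
        have key : ∀ t, R.ω.app (R.σ.app ((R.θ j).app t)) = R.ω.app t := by
          intro t
          rw [R.omega_sigma, app_app (R.hωθ j hj1 h2)]
        rwa [key, key] at hs

lemma Etriv {j : ℕ} (hj : j ≤ R.n) :
    ∀ e ∈ pairImg R.σ (R.E j), R.ω.app e.1 = R.ω.app e.2 := by
  rintro e ⟨e', he', rfl⟩
  have := (R.omega_run j).1 hj e' he'
  simpa [R.omega_sigma] using this

lemma sVars_sigmaT {j : ℕ} (hj : j ≤ R.n) :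
    sVars (Subst.app R.σ '' R.T j) ⊆ R.Vq :=
  R.sVars_image ((R.vars_run j).1 hj).1

end RunSetting



namespace RunSetting

variable (R : RunSetting)

lemma mem_C_of_TU {j : ℕ} {t : Term} (hj : j ≤ R.n) (ht : t ∈ R.T j ∪ R.U j) : t ∈ R.C := by
  unfold C
  simp only [Set.mem_iUnion, Set.mem_Iic]
  exact ⟨j, hj, Or.inl (Set.mem_biUnion ht (Term.mem_subterms_self t))⟩

lemma mem_C_of_EF {j : ℕ} {e : Term × Term} (hj : j ≤ R.n) (he : e ∈ R.E j ∪ R.F j) :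
    e.1 ∈ R.C ∧ e.2 ∈ R.C := by
  unfold C
  simp only [Set.mem_iUnion, Set.mem_Iic]
  constructor
  · exact ⟨j, hj, Or.inr (Set.mem_biUnion he (Or.inl (Term.mem_subterms_self e.1)))⟩
  · exact ⟨j, hj, Or.inr (Set.mem_biUnion he (Or.inr (Term.mem_subterms_self e.2)))⟩

lemma mem_C_subterm {c s : Term} (hc : c ∈ R.C) (hs : s ∈ c.subterms) : s ∈ R.C := by
  unfold C at hc ⊢
  simp only [Set.mem_iUnion, Set.mem_Iic] at hc ⊢
  obtain ⟨j, hj, hc⟩ := hc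
  refine ⟨j, hj, ?_⟩
  rcases hc with hc | hc
  · left
    unfold sSubterms at hc ⊢
    simp only [Set.mem_iUnion] at hc ⊢
    obtain ⟨t, ht, hct⟩ := hc
    exact ⟨t, ht, Term.subterms_subset hct hs⟩
  · right
    unfold pairSubterms at hc ⊢
    simp only [Set.mem_iUnion] at hc ⊢
    obtain ⟨e, he, hce⟩ := hc
    rcases hce with hce | hce
    · exact ⟨e, he, Or.inl (Term.subterms_subset hce hs)⟩
    · exact ⟨e, he, Or.inr (Term.subterms_subset hce hs)⟩

lemma typed_omega {c : Term} (hc : c ∈ R.C) : R.ω.app c ∈ R.typedSet := by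
  simp only [typedSet, Set.mem_union]
  exact Or.inl (Or.inr ⟨c, hc, rfl⟩)

lemma typed_sigmaD {d : Term} (hd : d ∈ R.C) (hnv : ∀ x, d ≠ Term.var x) :
    R.σ.app d ∈ R.typedSet := by
  simp only [typedSet, Set.mem_union]
  refine Or.inl (Or.inl ⟨d, ⟨hd, ?_⟩, rfl⟩)
  rintro ⟨x, hx⟩
  exact hnv x hx.symm

lemma typed_varVq {x : ℕ} (hx : x ∈ R.Vq) : Term.var x ∈ R.typedSet := by
  simp only [typedSet, Set.mem_union]
  exact Or.inr ⟨x, hx, rfl⟩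

lemma sigma_var_typed {x : ℕ} (hC : Term.var x ∈ R.C) (hdom : x ∈ R.σ.dom) :
    R.σ x ∈ R.typedSet := by
  have hg := R.hσground x hdom
  have h2 := R.hωσ x
  rw [Subst.app_ground hg] at h2
  have h3 : R.σ x = R.ω.app (Term.var x) := by
    rw [show R.ω.app (Term.var x) = R.ω x from rfl]
    exact h2
  rw [h3]
  exact R.typed_omega hC

lemma typed_sigma_of_C {a : Term} (ha : a ∈ R.C) (hW : a.tvars ⊆ R.W) :
    R.σ.app a ∈ R.typedSet := by
  cases a with
  | var x =>
      rcases hW (show x ∈ (Term.var x).tvars by simp [Term.tvars]) with h | h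
      · rw [show R.σ.app (Term.var x) = R.σ x from rfl, R.hσVq x h]
        exact R.typed_varVq h
      · exact R.sigma_var_typed ha h
  | name n => exact R.typed_sigmaD ha (by intro x h; cases h)
  | pair a b => exact R.typed_sigmaD ha (by intro x h; cases h)
  | enc a b => exact R.typed_sigmaD ha (by intro x h; cases h)

/-- A component of a typed composite term is "OK". -/
def SideOK (a : Term) : Prop :=
  a.ground ∨ (∃ c ∈ R.C, R.ω.app a = R.ω.app c ∧ (a.tvars ⊆ R.Vq → a ∈ R.typedSet))

lemma sideOK_of_comp {d0 : Term} (hd0 : d0 ∈ R.C) : R.SideOK (R.σ.app d0) := by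
  right
  refine ⟨d0, hd0, R.omega_sigma d0, ?_⟩
  intro hVq
  cases d0 with
  | var x =>
      by_cases h : R.σ x = Term.var x
      · rw [show R.σ.app (Term.var x) = R.σ x from rfl, h]
        apply R.typed_varVq
        have : x ∈ (R.σ.app (Term.var x)).tvars := by
          rw [show R.σ.app (Term.var x) = R.σ x from rfl, h]
          simp [Term.tvars]
        exact hVq this
      · exact R.sigma_var_typed hd0 h
  | name n => exact R.typed_sigmaD hd0 (by intro x h; cases h)
  | pair a b => exact R.typed_sigmaD hd0 (by intro x h; cases h)
  | enc a b => exact R.typed_sigmaD hd0 (by intro x h; cases h)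

lemma sideOK_of_omega {c0 : Term} (hc0 : c0 ∈ R.C) : R.SideOK (R.ω.app c0) :=
  Or.inr ⟨c0, hc0, R.omega_idem c0, fun _ => R.typed_omega hc0⟩

lemma comp_pair {a b : Term} (h : Term.pair a b ∈ R.typedSet) :
    R.SideOK a ∧ R.SideOK b := by
  simp only [typedSet, Set.mem_union, Set.mem_image, varTerms] at h
  rcases h with (⟨d, hdD, hda⟩ | ⟨c, hcC, hca⟩) | ⟨z, hz, hza⟩
  · obtain ⟨hdC, hdv⟩ := hdD
    cases d with
    | name n => simp [Subst.app] at hda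
    | var x => exact absurd ⟨x, rfl⟩ hdv
    | enc d0 d1 => simp [Subst.app] at hda
    | pair d0 d1 =>
        simp only [Subst.app, Term.pair.injEq] at hda
        obtain ⟨h1, h2⟩ := hda
        subst h1; subst h2
        exact ⟨R.sideOK_of_comp (R.mem_C_subterm hdC Term.pair_left_mem_subterms),
               R.sideOK_of_comp (R.mem_C_subterm hdC Term.pair_right_mem_subterms)⟩
  · cases c with
    | name n => simp [Subst.app] at hca
    | enc c0 c1 => simp [Subst.app] at hca
    | var x =>
        rw [show R.ω.app (Term.var x) = R.ω x from rfl] at hca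
        have hdom : R.ω x ≠ Term.var x := by
          intro h'; rw [h'] at hca; cases hca
        have hg := R.hωground x hdom
        rw [hca, Term.ground_pair] at hg
        exact ⟨Or.inl hg.1, Or.inl hg.2⟩
    | pair c0 c1 =>
        simp only [Subst.app, Term.pair.injEq] at hca
        obtain ⟨h1, h2⟩ := hca
        subst h1; subst h2
        exact ⟨R.sideOK_of_omega (R.mem_C_subterm hcC Term.pair_left_mem_subterms),
               R.sideOK_of_omega (R.mem_C_subterm hcC Term.pair_right_mem_subterms)⟩
  · cases hza

lemma comp_enc {a b : Term} (h : Term.enc a b ∈ R.typedSet) :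
    R.SideOK a ∧ R.SideOK b := by
  simp only [typedSet, Set.mem_union, Set.mem_image, varTerms] at h
  rcases h with (⟨d, hdD, hda⟩ | ⟨c, hcC, hca⟩) | ⟨z, hz, hza⟩
  · obtain ⟨hdC, hdv⟩ := hdD
    cases d with
    | name n => simp [Subst.app] at hda
    | var x => exact absurd ⟨x, rfl⟩ hdv
    | pair d0 d1 => simp [Subst.app] at hda
    | enc d0 d1 =>
        simp only [Subst.app, Term.enc.injEq] at hda
        obtain ⟨h1, h2⟩ := hda
        subst h1; subst h2
        exact ⟨R.sideOK_of_comp (R.mem_C_subterm hdC Term.enc_left_mem_subterms),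
               R.sideOK_of_comp (R.mem_C_subterm hdC Term.enc_right_mem_subterms)⟩
  · cases c with
    | name n => simp [Subst.app] at hca
    | pair c0 c1 => simp [Subst.app] at hca
    | var x =>
        rw [show R.ω.app (Term.var x) = R.ω x from rfl] at hca
        have hdom : R.ω x ≠ Term.var x := by
          intro h'; rw [h'] at hca; cases hca
        have hg := R.hωground x hdom
        rw [hca, Term.ground_enc] at hg
        exact ⟨Or.inl hg.1, Or.inl hg.2⟩
    | enc c0 c1 =>
        simp only [Subst.app, Term.enc.injEq] at hca
        obtain ⟨h1, h2⟩ := hca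
        subst h1; subst h2
        exact ⟨R.sideOK_of_omega (R.mem_C_subterm hcC Term.enc_left_mem_subterms),
               R.sideOK_of_omega (R.mem_C_subterm hcC Term.enc_right_mem_subterms)⟩
  · cases hza

lemma good_of_sides {a b : Term} (hA : R.SideOK a) (hB : R.SideOK b)
    (hω : R.ω.app a = R.ω.app b) (hav : a.tvars ⊆ R.Vq) (hbv : b.tvars ⊆ R.Vq) :
    a = b ∨ (a ∈ R.typedSet ∧ b ∈ R.typedSet) := by
  rcases hA with hA | ⟨ca, hca, hωa, hta⟩
  · rcases hB with hB | ⟨cb, hcb, hωb, htb⟩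
    · left
      rw [← Subst.app_ground (σ := R.ω) hA, ← Subst.app_ground (σ := R.ω) hB]
      exact hω
    · right
      refine ⟨?_, htb hbv⟩
      have : a = R.ω.app cb := by
        rw [← hωb, ← hω, Subst.app_ground hA]
      rw [this]
      exact R.typed_omega hcb
  · rcases hB with hB | ⟨cb, hcb, hωb, htb⟩
    · right
      refine ⟨hta hav, ?_⟩
      have : b = R.ω.app ca := by
        rw [← hωa, hω, Subst.app_ground hB]
      rw [this]
      exact R.typed_omega hca
    · exact Or.inr ⟨hta hav, htb hbv⟩

/-- The `Good` predicate: the conclusion is trivial or typed. -/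
def Good (c : Term × Term) : Prop :=
  c.1 = c.2 ∨ (c.1 ∈ R.typedSet ∧ c.2 ∈ R.typedSet)

end RunSetting



namespace EPT

lemma sub_subproof {p q : EPT} (h : Sub p q) : Subproof p q :=
  Relation.ReflTransGen.single h

lemma subproof_valid {inv : Term → Term} {T : Set Term} {E : Set (Term × Term)} {p q : EPT}
    (h : Subproof p q) (hv : valid inv T E q) : valid inv T E p :=
  fun r hr => hv r (hr.trans h)

lemma subproof_normal {p q : EPT} (h : Subproof p q) (hn : normalP q) : normalP p :=
  fun r hr => hn r (hr.trans h)

lemma containsCons_mono {p q : EPT} (h : Subproof p q) (hc : containsCons p) :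
    containsCons q := by
  obtain ⟨r, hr, hrc⟩ := hc
  exact ⟨r, hr.trans h, hrc⟩

lemma sizeOf_pos (π : EPT) : 0 < sizeOf π := by
  cases π <;> simp +arith +decide

lemma dpt_dy {inv : Term → Term} {X : Set Term} :
    ∀ (d : DPT) (t : Term), DPT.valid inv X d → DPT.concl inv d = some t → dy inv X t := by
  intro d
  induction d with
  | ax s =>
      intro t hv hc
      simp only [DPT.concl, Option.some.injEq] at hc
      subst hc
      exact dy.ax hv
  | pair p q ihp ihq =>
      intro t hv hc
      obtain ⟨hvp, hvq⟩ := hv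
      cases hp : DPT.concl inv p with
      | none => simp [DPT.concl, hp] at hc
      | some a =>
          cases hq : DPT.concl inv q with
          | none => simp [DPT.concl, hp, hq] at hc
          | some b =>
              simp only [DPT.concl, hp, hq, Option.some.injEq] at hc
              subst hc
              exact dy.pair (ihp a hvp hp) (ihq b hvq hq)
  | enc p q ihp ihq =>
      intro t hv hc
      obtain ⟨hvp, hvq⟩ := hv
      cases hp : DPT.concl inv p with
      | none => simp [DPT.concl, hp] at hc
      | some a =>
          cases hq : DPT.concl inv q with
          | none => simp [DPT.concl, hp, hq] at hc
          | some b =>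
              simp only [DPT.concl, hp, hq, Option.some.injEq] at hc
              subst hc
              exact dy.enc (ihp a hvp hp) (ihq b hvq hq)
  | fst p ihp =>
      intro t hv hc
      obtain ⟨hvp, a, b, hp⟩ := hv
      simp only [DPT.concl, hp, Option.some.injEq] at hc
      subst hc
      exact dy.fst (ihp _ hvp hp)
  | snd p ihp =>
      intro t hv hc
      obtain ⟨hvp, a, b, hp⟩ := hv
      simp only [DPT.concl, hp, Option.some.injEq] at hc
      subst hc
      exact dy.snd (ihp _ hvp hp)
  | dec p q ihp ihq =>
      intro t hv hc
      obtain ⟨hvp, hvq, a, k, hp, hq⟩ := hv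
      simp only [DPT.concl, hp, hq, if_pos, Option.some.injEq] at hc
      subst hc
      exact dy.dec (ihp _ hvp hp) (ihq _ hvq hq)

lemma chain_eqdrv {inv : Term → Term} {T : Set Term} {E : Set (Term × Term)} :
    ∀ (ps : List EPT), ps ≠ [] →
      (∀ p ∈ ps, eqdrv inv T E p.concl.1 p.concl.2) →
      List.Chain' (fun a b => a.concl.2 = b.concl.1) ps →
      ∀ t u, (ps.head?.map fun p => p.concl.1) = some t →
             (ps.getLast?.map fun p => p.concl.2) = some u →
             eqdrv inv T E t u := by
  intro ps
  induction ps with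
  | nil => intro h; exact absurd rfl h
  | cons p rest IH =>
      intro _ hmem hch t u hh hl
      simp only [List.head?_cons, Option.map_some, Option.some.injEq] at hh
      cases rest with
      | nil =>
          simp only [List.getLast?_singleton, Option.map_some, Option.some.injEq] at hl
          subst hh; subst hl
          exact hmem p (by simp)
      | cons q rest' =>
          have hl' : ((q :: rest').getLast?.map fun p => p.concl.2) = some u := by
            rwa [List.getLast?_cons_cons] at hl
          have hlink : p.concl.2 = q.concl.1 := (List.isChain_cons_cons.mp hch).1
          have h2 := IH (by simp) (fun r hr => hmem r (by simp [hr]))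
            (List.isChain_cons_cons.mp hch).2 q.concl.1 u (by simp) hl'
          have h1 := hmem p (by simp)
          rw [hlink] at h1
          subst hh
          exact eqdrv.trans h1 h2

lemma valid_eqdrv {inv : Term → Term} {T : Set Term} {E : Set (Term × Term)} :
    ∀ (N : ℕ) (π : EPT), sizeOf π ≤ N → valid inv T E π →
      eqdrv inv T E π.concl.1 π.concl.2 := by
  intro N
  induction N with
  | zero =>
      intro π h
      exact absurd h (by have := sizeOf_pos π; omega)
  | succ N IH =>
    intro π hsz hv
    have hl := hv π Relation.ReflTransGen.refl
    cases π with
    | ax t u => exact eqdrv.ax hl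
    | eq t d =>
        obtain ⟨hd, hc⟩ := hl
        exact eqdrv.eq (dpt_dy d t hd hc)
    | sym t u p =>
        have hp := IH p (by simp only [sym.sizeOf_spec] at hsz; omega)
          (subproof_valid (sub_subproof Sub.sym) hv)
        rw [hl] at hp
        exact eqdrv.sym hp
    | trans t u ps =>
        obtain ⟨hne, hh, hl2, hch⟩ := hl
        have hmem : ∀ p ∈ ps, eqdrv inv T E p.concl.1 p.concl.2 := by
          intro p hp
          have h1 := List.sizeOf_lt_of_mem hp
          have h2 : sizeOf p ≤ N := by
            simp only [trans.sizeOf_spec] at hsz; omega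
          exact IH p h2 (subproof_valid (sub_subproof (Sub.trans hp)) hv)
        exact chain_eqdrv ps hne hmem hch t u hh hl2
    | consPair t0 u0 t1 u1 p q =>
        obtain ⟨h1, h2⟩ := hl
        have hp := IH p (by simp only [consPair.sizeOf_spec] at hsz; omega)
          (subproof_valid (sub_subproof Sub.consPairL) hv)
        have hq := IH q (by simp only [consPair.sizeOf_spec] at hsz; omega)
          (subproof_valid (sub_subproof Sub.consPairR) hv)
        rw [h1] at hp; rw [h2] at hq
        exact eqdrv.consPair hp hq
    | consEnc t0 u0 t1 u1 p q =>
        obtain ⟨h1, h2⟩ := hl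
        have hp := IH p (by simp only [consEnc.sizeOf_spec] at hsz; omega)
          (subproof_valid (sub_subproof Sub.consEncL) hv)
        have hq := IH q (by simp only [consEnc.sizeOf_spec] at hsz; omega)
          (subproof_valid (sub_subproof Sub.consEncR) hv)
        rw [h1] at hp; rw [h2] at hq
        exact eqdrv.consEnc hp hq
    | projPairFst t0 t1 u0 u1 p =>
        obtain ⟨hc, d0, d1, d2, d3⟩ := hl
        have hp := IH p (by simp only [projPairFst.sizeOf_spec] at hsz; omega)
          (subproof_valid (sub_subproof Sub.projPairFst) hv)
        rw [hc] at hp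
        exact eqdrv.projPairFst hp d0 d1 d2 d3
    | projPairSnd t0 t1 u0 u1 p =>
        obtain ⟨hc, d0, d1, d2, d3⟩ := hl
        have hp := IH p (by simp only [projPairSnd.sizeOf_spec] at hsz; omega)
          (subproof_valid (sub_subproof Sub.projPairSnd) hv)
        rw [hc] at hp
        exact eqdrv.projPairSnd hp d0 d1 d2 d3
    | projEncFst t0 t1 u0 u1 p =>
        obtain ⟨hc, d0, d1, d2, d3⟩ := hl
        have hp := IH p (by simp only [projEncFst.sizeOf_spec] at hsz; omega)
          (subproof_valid (sub_subproof Sub.projEncFst) hv)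
        rw [hc] at hp
        exact eqdrv.projEncFst hp d0 d1 d2 d3
    | projEncSnd t0 t1 u0 u1 p =>
        obtain ⟨hc, d0, d1, d2, d3⟩ := hl
        have hp := IH p (by simp only [projEncSnd.sizeOf_spec] at hsz; omega)
          (subproof_valid (sub_subproof Sub.projEncSnd) hv)
        rw [hc] at hp
        exact eqdrv.projEncSnd hp d0 d1 d2 d3

end EPT



/-- Main lemma: cons-free normal valid proofs have good (trivial or typed) conclusions. -/
lemma good_main (R : RunSetting) {i : ℕ} (hi : i ≤ R.n) :
    ∀ (N : ℕ) (π : EPT), sizeOf π ≤ N →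
      EPT.valid R.inv (Subst.app R.σ '' R.T i) (pairImg R.σ (R.E i)) π →
      EPT.normalP π → ¬ π.containsCons → R.Good π.concl := by
  intro N
  induction N with
  | zero =>
      intro π h
      exact absurd h (by have := EPT.sizeOf_pos π; omega)
  | succ N IH =>
    intro π hsz hv hn hcc
    have hl := hv π Relation.ReflTransGen.refl
    have hln := hn π Relation.ReflTransGen.refl
    cases π with
    | ax t u =>
        obtain ⟨⟨a, b⟩, hab, heq⟩ := hl
        injection heq with e1 e2
        subst e1; subst e2
        have hC := R.mem_C_of_EF hi (Set.mem_union_left _ hab)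
        have hW := ((R.vars_run i).1 hi).2 _ hab
        exact Or.inr ⟨R.typed_sigma_of_C hC.1 (fun x hx => hW (Or.inl hx)),
                      R.typed_sigma_of_C hC.2 (fun x hx => hW (Or.inr hx))⟩
    | eq t d => exact Or.inl rfl
    | sym t u p =>
        have hg := IH p (by simp only [EPT.sym.sizeOf_spec] at hsz; omega)
          (EPT.subproof_valid (EPT.sub_subproof EPT.Sub.sym) hv)
          (EPT.subproof_normal (EPT.sub_subproof EPT.Sub.sym) hn)
          (fun h => hcc (EPT.containsCons_mono (EPT.sub_subproof EPT.Sub.sym) h))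
        rw [hl] at hg
        rcases hg with h | ⟨h1, h2⟩
        · exact Or.inl (h.symm)
        · exact Or.inr ⟨h2, h1⟩
    | trans t u ps =>
        obtain ⟨hne, hh, hl2, hch⟩ := hl
        obtain ⟨hnt, -⟩ := hln
        have hgood : ∀ q ∈ ps, R.Good q.concl := by
          intro q hq
          have h1 := List.sizeOf_lt_of_mem hq
          refine IH q (by simp only [EPT.trans.sizeOf_spec] at hsz; omega)
            (EPT.subproof_valid (EPT.sub_subproof (EPT.Sub.trans hq)) hv)
            (EPT.subproof_normal (EPT.sub_subproof (EPT.Sub.trans hq)) hn)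
            (fun h => hcc (EPT.containsCons_mono (EPT.sub_subproof (EPT.Sub.trans hq)) h))
        have htyped : ∀ q ∈ ps, q.concl.1 ∈ R.typedSet ∧ q.concl.2 ∈ R.typedSet := by
          intro q hq
          rcases hgood q hq with h | h
          · exact absurd h (hnt q hq).2
          · exact h
        cases ps with
        | nil => exact absurd rfl hne
        | cons p rest =>
          simp only [List.head?_cons, Option.map_some, Option.some.injEq] at hh
          have hq := List.getLast?_eq_getLast (l := p :: rest) (by simp)
          rw [hq] at hl2
          simp only [Option.map_some, Option.some.injEq] at hl2
          have ht1 := (htyped p (by simp)).1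
          have ht2 := (htyped ((p :: rest).getLast (by simp))
            (List.getLast_mem (by simp))).2
          rw [hh] at ht1
          rw [hl2] at ht2
          exact Or.inr ⟨ht1, ht2⟩
    | consPair t0 u0 t1 u1 p q =>
        exact absurd ⟨EPT.consPair t0 u0 t1 u1 p q, Relation.ReflTransGen.refl, trivial⟩ hcc
    | consEnc t0 u0 t1 u1 p q =>
        exact absurd ⟨EPT.consEnc t0 u0 t1 u1 p q, Relation.ReflTransGen.refl, trivial⟩ hcc
    | projPairFst t0 t1 u0 u1 p =>
        obtain ⟨hc, d0, d1, d2, d3⟩ := hl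
        have hg := IH p (by simp only [EPT.projPairFst.sizeOf_spec] at hsz; omega)
          (EPT.subproof_valid (EPT.sub_subproof EPT.Sub.projPairFst) hv)
          (EPT.subproof_normal (EPT.sub_subproof EPT.Sub.projPairFst) hn) hln
        rw [hc] at hg
        have hω : R.ω.app t0 = R.ω.app u0 := by
          have he := EPT.valid_eqdrv (sizeOf (EPT.projPairFst t0 t1 u0 u1 p)) _ le_rfl hv
          exact eqdrv_sound R.ω (R.Etriv hi) he
        rcases hg with h | ⟨h1, h2⟩
        · have h' : Term.pair t0 t1 = Term.pair u0 u1 := h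
          injection h' with e1 e2
          exact Or.inl e1
        · exact R.good_of_sides (R.comp_pair h1).1 (R.comp_pair h2).1 hω
            ((dy_tvars d0).trans (R.sVars_sigmaT hi))
            ((dy_tvars d2).trans (R.sVars_sigmaT hi))
    | projPairSnd t0 t1 u0 u1 p =>
        obtain ⟨hc, d0, d1, d2, d3⟩ := hl
        have hg := IH p (by simp only [EPT.projPairSnd.sizeOf_spec] at hsz; omega)
          (EPT.subproof_valid (EPT.sub_subproof EPT.Sub.projPairSnd) hv)
          (EPT.subproof_normal (EPT.sub_subproof EPT.Sub.projPairSnd) hn) hln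
        rw [hc] at hg
        have hω : R.ω.app t1 = R.ω.app u1 := by
          have he := EPT.valid_eqdrv (sizeOf (EPT.projPairSnd t0 t1 u0 u1 p)) _ le_rfl hv
          exact eqdrv_sound R.ω (R.Etriv hi) he
        rcases hg with h | ⟨h1, h2⟩
        · have h' : Term.pair t0 t1 = Term.pair u0 u1 := h
          injection h' with e1 e2
          exact Or.inl e2
        · exact R.good_of_sides (R.comp_pair h1).2 (R.comp_pair h2).2 hω
            ((dy_tvars d1).trans (R.sVars_sigmaT hi))
            ((dy_tvars d3).trans (R.sVars_sigmaT hi))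
    | projEncFst t0 t1 u0 u1 p =>
        obtain ⟨hc, d0, d1, d2, d3⟩ := hl
        have hg := IH p (by simp only [EPT.projEncFst.sizeOf_spec] at hsz; omega)
          (EPT.subproof_valid (EPT.sub_subproof EPT.Sub.projEncFst) hv)
          (EPT.subproof_normal (EPT.sub_subproof EPT.Sub.projEncFst) hn) hln
        rw [hc] at hg
        have hω : R.ω.app t0 = R.ω.app u0 := by
          have he := EPT.valid_eqdrv (sizeOf (EPT.projEncFst t0 t1 u0 u1 p)) _ le_rfl hv
          exact eqdrv_sound R.ω (R.Etriv hi) he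
        rcases hg with h | ⟨h1, h2⟩
        · have h' : Term.enc t0 t1 = Term.enc u0 u1 := h
          injection h' with e1 e2
          exact Or.inl e1
        · exact R.good_of_sides (R.comp_enc h1).1 (R.comp_enc h2).1 hω
            ((dy_tvars d0).trans (R.sVars_sigmaT hi))
            ((dy_tvars d2).trans (R.sVars_sigmaT hi))
    | projEncSnd t0 t1 u0 u1 p =>
        obtain ⟨hc, d0, d1, d2, d3⟩ := hl
        have hg := IH p (by simp only [EPT.projEncSnd.sizeOf_spec] at hsz; omega)
          (EPT.subproof_valid (EPT.sub_subproof EPT.Sub.projEncSnd) hv)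
          (EPT.subproof_normal (EPT.sub_subproof EPT.Sub.projEncSnd) hn) hln
        rw [hc] at hg
        have hω : R.ω.app t1 = R.ω.app u1 := by
          have he := EPT.valid_eqdrv (sizeOf (EPT.projEncSnd t0 t1 u0 u1 p)) _ le_rfl hv
          exact eqdrv_sound R.ω (R.Etriv hi) he
        rcases hg with h | ⟨h1, h2⟩
        · have h' : Term.enc t0 t1 = Term.enc u0 u1 := h
          injection h' with e1 e2
          exact Or.inl e2
        · exact R.good_of_sides (R.comp_enc h1).2 (R.comp_enc h2).2 hω
            ((dy_tvars d1).trans (R.sVars_sigmaT hi))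
            ((dy_tvars d3).trans (R.sVars_sigmaT hi))


/-- Theorem (rustur-eq): normal ⊢eq proofs are typed. -/
theorem stmt14 (R : RunSetting) (i : ℕ) (hi : i ≤ R.n) (π : EPT)
    (hv : EPT.valid R.inv (Subst.app R.σ '' R.T i) (pairImg R.σ (R.E i)) π)
    (hn : EPT.normalP π) :
    EPT.typedP R.typedSet π := by
  intro π' hsub
  by_cases hcc : π'.containsCons
  · exact Or.inl hcc
  · have hg := good_main R hi (sizeOf π') π' le_rfl
      (EPT.subproof_valid hsub hv) (EPT.subproof_normal hsub hn) hcc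
    rcases hg with h | h
    · exact Or.inr (Or.inl h)
    · exact Or.inr (Or.inr h)
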